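/- Let μ be an infinite cardinal and X a topological space whose tightness is at most μ and such that for every free set D ⊆ X the closure of D has Lindelöf number at most μ (every cover of the closure of D by open subsets of X has a subfamily of size at most μ covering it). Then X contains no free sequence of length μ⁺ (the cardinal successor of μ). -/

import Mathlib

open Cardinal Set Filter Topology

/-- `IsFreeSequence x` says that the injective transfinite family `x`, indexed by the
ordinals below `η`, is a free sequence: for every `β < η` the closure of the initial
part `{x_α : α < β}` is disjoint from the closure of the final part `{x_α : β ≤ α}`. -/
def IsFreeSequence {X : Type u} [TopologicalSpace X] {η : Ordinal.{u}}
    (x : Set.Iio η → X) : Prop :=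
  Function.Injective x ∧
    ∀ β : Set.Iio η,
      Disjoint (closure (x '' {α | (α : Ordinal) < (β : Ordinal)}))
        (closure (x '' {α | (β : Ordinal) ≤ (α : Ordinal)}))

/-- A set `D` is *free* if it can be enumerated as a free sequence. -/
def IsFreeSet {X : Type u} [TopologicalSpace X] (D : Set X) : Prop :=
  ∃ (η : Ordinal.{u}) (x : Set.Iio η → X), IsFreeSequence x ∧ Set.range x = D

theorem no_free_sequence_of_length_succ
    {X : Type u} [TopologicalSpace X] (μ : Cardinal.{u})
    (hμ : ℵ₀ ≤ μ)
    (htight : ∀ A : Set X, ∀ x ∈ closure A, ∃ B ⊆ A, #B ≤ μ ∧ x ∈ closure B)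
    (hfree : ∀ D : Set X, IsFreeSet D →
      ∀ 𝒰 : Set (Set X), (∀ U ∈ 𝒰, IsOpen U) → closure D ⊆ ⋃₀ 𝒰 →
        ∃ 𝒱 ⊆ 𝒰, #𝒱 ≤ μ ∧ closure D ⊆ ⋃₀ 𝒱) :
    ¬ ∃ x : Set.Iio (Order.succ μ).ord → X, IsFreeSequence x := by
  rintro ⟨f, hfinj, hffree⟩
  have hcof : (Order.succ μ).ord.cof = Order.succ μ := (Cardinal.isRegular_succ hμ).cof_eq
  have hlim : Order.IsSuccLimit (Order.succ μ).ord := Cardinal.isSuccLimit_ord (hμ.trans (Order.le_succ μ))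
  set D := Set.range f with hD
  set U : Set.Iio (Order.succ μ).ord → Set X :=
    fun b => (closure (f '' {α | (b : Ordinal) ≤ (α : Ordinal)}))ᶜ with hU
  have hcover : closure D ⊆ ⋃₀ (Set.range U) := by
    intro y hy
    obtain ⟨B, hBD, hBcard, hyB⟩ := htight D y hy
    choose a ha using fun b : B => hBD b.2
    have hbdd : ∀ b : B, ((a b : Ordinal) + 1) < (Order.succ μ).ord := fun b =>
      hlim.add_one_lt (a b).2
    set γ := ⨆ b : B, ((a b : Ordinal) + 1) with hγdef
    have hγ : γ < (Order.succ μ).ord := by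
      refine Ordinal.iSup_lt_ord ?_ hbdd
      rw [hcof]
      exact hBcard.trans_lt (Order.lt_succ μ)
    have hBsub : B ⊆ f '' {α | (α : Ordinal) < γ} := by
      intro b hb
      refine ⟨a ⟨b, hb⟩, ?_, ha ⟨b, hb⟩⟩
      have h1 : ((a ⟨b, hb⟩ : Ordinal) + 1) ≤ γ := Ordinal.le_iSup _ (⟨b, hb⟩ : B)
      exact lt_of_lt_of_le (by rw [Ordinal.add_one_eq_succ]; exact Order.lt_succ _) h1
    have hyini : y ∈ closure
        (f '' {α | (α : Ordinal) < ((⟨γ, hγ⟩ : Set.Iio (Order.succ μ).ord) : Ordinal)}) :=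
      closure_mono hBsub hyB
    refine ⟨U ⟨γ, hγ⟩, ⟨⟨γ, hγ⟩, rfl⟩, ?_⟩
    intro hmem
    exact Set.disjoint_left.mp (hffree ⟨γ, hγ⟩) hyini hmem
  obtain ⟨𝒱, h𝒱U, h𝒱card, h𝒱cover⟩ :=
    hfree D ⟨(Order.succ μ).ord, f, ⟨hfinj, hffree⟩, rfl⟩ (Set.range U)
      (by rintro _ ⟨b, rfl⟩; exact isClosed_closure.isOpen_compl) hcover
  choose β hβ using fun V : 𝒱 => h𝒱U V.2
  set γ := ⨆ V : 𝒱, ((β V : Ordinal)) with hγdef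
  have hγ : γ < (Order.succ μ).ord := by
    refine Ordinal.iSup_lt_ord ?_ (fun V => (β V).2)
    rw [hcof]
    exact h𝒱card.trans_lt (Order.lt_succ μ)
  have hmem : f ⟨γ, hγ⟩ ∈ closure D := subset_closure ⟨⟨γ, hγ⟩, rfl⟩
  obtain ⟨V, hV𝒱, hfV⟩ := h𝒱cover hmem
  have hVeq : U (β ⟨V, hV𝒱⟩) = V := hβ ⟨V, hV𝒱⟩
  rw [← hVeq] at hfV
  apply hfV
  exact subset_closure ⟨⟨γ, hγ⟩, Ordinal.le_iSup (fun V : 𝒱 => ((β V : Ordinal))) ⟨V, hV𝒱⟩, rfl⟩
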